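/- arXiv:2103.14436 — 2 statements merged into one kernel-verified Lean document; each statement's English description precedes it below -/
import Mathlib

section
/- Let G=(V,E,w) be a finite weighted directed tree and let x,y∈V be at (unweighted shortest-path) distance d, with (z_i)_{i=0}^{d} the unique sequence of vertices with z_0=x, z_d=y and d(z_{i-1},z_i)=1 for all i∈[d]. For a subset I⊆[d] let G_I denote the graph obtained from G by removing, for each i∈I, all edges between z_{i-1} and z_i, and denote by G_I^1,…,G_I^{|I|+1} the |I|+1 weakly connected components of G_I. Then for every q>0, U_q^{(G)}(x,y) = (1/Z_G(q))·∑_{k=1}^{d} (−1)^{k+1} ∑_{I∈([d] choose k)} ∏_{i=1}^{k+1} Z_{G_I^i}(q). In particular, when d(x,y)=1, U_q(x,y) = Z_x(q)·Z_y(q)/Z_G(q), where Z_x(q) and Z_y(q) are the partition functions of the two connected components of the graph obtained by removing the edges between x and y. -/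
open Classical Finset Filter

noncomputable section

variable {V : Type*} [Fintype V] [DecidableEq V]

/-- One step of following the parent map of a rooted forest. -/
def fstep (f : V → Option V) : Option V → Option V := fun o => o.bind f

/-- `f : V → Option V` encodes a spanning rooted forest structure: every vertex either is a
root (`f x = none`) or points to its parent, and iterating the parent map from any vertex
eventually reaches a root (i.e. there are no cycles). -/
def IsForest (f : V → Option V) : Prop :=
  ∀ x : V, ∃ n : ℕ, (fstep f)^[n] (some x) = none

/-- `f` is a spanning rooted forest of the directed graph with edge relation `E`:
all its (parent-pointing) edges are edges of the graph. -/
def IsRForest (E : V → V → Prop) (f : V → Option V) : Prop :=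
  IsForest f ∧ ∀ x y : V, f x = some y → E x y

/-- The number of roots (equivalently, of trees) of a rooted forest. -/
def nRoots (f : V → Option V) : ℕ := (univ.filter fun x : V => f x = none).card

/-- The weight `w(F) = ∏_{e ∈ F} w(e)` of a rooted forest. -/
def fWeight (w : V → V → ℝ) (f : V → Option V) : ℝ :=
  ∏ x : V, (f x).elim 1 (fun y => w x y)

/-- Non-normalised forest measure of a set `H` of forests: `∑_{F ∈ H} q^{r(F)} w(F)`,
the sum running over spanning rooted forests of the graph belonging to `H`. -/
def fMeasure (E : V → V → Prop) (w : V → V → ℝ) (q : ℝ) (H : Set (V → Option V)) : ℝ :=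
  ∑ f ∈ univ.filter (fun f : V → Option V => IsRForest E f ∧ f ∈ H),
    q ^ nRoots f * fWeight w f

/-- Partition function `Z(q) = ∑_F q^{r(F)} w(F)`. -/
def Zf (E : V → V → Prop) (w : V → V → ℝ) (q : ℝ) : ℝ := fMeasure E w q Set.univ

/-- Probability `P(Φ_q ∈ H)` for the random spanning rooted forest `Φ_q`. -/
def fProb (E : V → V → Prop) (w : V → V → ℝ) (q : ℝ) (H : Set (V → Option V)) : ℝ :=
  fMeasure E w q H / Zf E w q

/-- Ancestor relation in the forest `f`. -/
def anc (f : V → Option V) : V → V → Prop :=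
  Relation.ReflTransGen (fun a b => f a = some b)

/-- `x` and `y` belong to the same tree of the forest `f` (they have a common ancestor). -/
def SameTree (f : V → Option V) (x y : V) : Prop := ∃ z, anc f x z ∧ anc f y z

/-- Two-point correlation `U_q(x,y)`: the probability that `x` and `y` lie in
different trees of `Φ_q`. -/
def Ucorr (E : V → V → Prop) (w : V → V → ℝ) (q : ℝ) (x y : V) : ℝ :=
  fProb E w q {f | ¬ SameTree f x y}

end

noncomputable section

variable {V : Type*} [Fintype V] [DecidableEq V]

/-- The underlying undirected simple graph of a directed edge relation. -/
def usg (E : V → V → Prop) : SimpleGraph V where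
  Adj a b := a ≠ b ∧ (E a b ∨ E b a)
  symm := ⟨fun _ _ h => ⟨h.1.symm, h.2.symm⟩⟩
  loopless := ⟨fun _ h => h.1 rfl⟩

/-- Partition function of the induced (directed, weighted) subgraph on a vertex set `S`. -/
def ZOn (E : V → V → Prop) (w : V → V → ℝ) (S : Set V) (q : ℝ) : ℝ :=
  Zf (fun a b : S => E a.1 b.1) (fun a b : S => w a.1 b.1) q

/-- The product, over the (weakly) connected components of the graph, of the partition
functions of the corresponding induced subgraphs. -/
def ZComps (E : V → V → Prop) (w : V → V → ℝ) (q : ℝ) : ℝ :=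
  ∏ c : (usg E).ConnectedComponent, ZOn E w c.supp q

set_option linter.unusedSectionVars false
set_option linter.unreachableTactic false
set_option linter.unusedTactic false
set_option maxHeartbeats 1000000


set_option linter.unusedSectionVars false

lemma fstep_none (f : V → Option V) (n : ℕ) : (fstep f)^[n] none = none := by
  induction n with
  | zero => rfl
  | succ n ih => rw [Function.iterate_succ_apply']; rw [ih]; rfl

lemma isForest_no_fix {f : V → Option V} (hf : IsForest f) (a : V) : f a ≠ some a := by
  intro h
  obtain ⟨n, hn⟩ := hf a
  have : ∀ n, (fstep f)^[n] (some a) = some a := by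
    intro n
    induction n with
    | zero => rfl
    | succ n ih => rw [Function.iterate_succ_apply', ih]; exact h
  rw [this n] at hn; exact Option.some_ne_none a hn

lemma anc_iff_iterate {f : V → Option V} {a b : V} :
    anc f a b ↔ ∃ n, (fstep f)^[n] (some a) = some b := by
  constructor
  · intro h
    induction h with
    | refl => exact ⟨0, rfl⟩
    | tail _ hbc ih =>
      obtain ⟨n, hn⟩ := ih
      exact ⟨n + 1, by rw [Function.iterate_succ_apply', hn]; exact hbc⟩
  · rintro ⟨n, hn⟩
    induction n generalizing a with
    | zero => cases hn; exact Relation.ReflTransGen.refl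
    | succ n ih =>
      rw [Function.iterate_succ_apply] at hn
      rcases hc : f a with _ | c
      · rw [show fstep f (some a) = f a from rfl, hc, fstep_none] at hn
        exact absurd hn (by simp)
      · rw [show fstep f (some a) = f a from rfl, hc] at hn
        exact Relation.ReflTransGen.head hc (ih hn)

lemma anc_total {f : V → Option V} {a b c : V} (hab : anc f a b) (hac : anc f a c) :
    anc f b c ∨ anc f c b := by
  rw [anc_iff_iterate] at hab hac
  obtain ⟨n, hn⟩ := hab
  obtain ⟨m, hm⟩ := hac
  rcases le_total n m with h | h
  · left
    rw [anc_iff_iterate]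
    refine ⟨m - n, ?_⟩
    rw [← hn, ← Function.iterate_add_apply, Nat.sub_add_cancel h, hm]
  · right
    rw [anc_iff_iterate]
    refine ⟨n - m, ?_⟩
    rw [← hm, ← Function.iterate_add_apply, Nat.sub_add_cancel h, hn]

lemma sameTree_refl (f : V → Option V) (a : V) : SameTree f a a :=
  ⟨a, Relation.ReflTransGen.refl, Relation.ReflTransGen.refl⟩

lemma sameTree_symm {f : V → Option V} {a b : V} (h : SameTree f a b) : SameTree f b a := by
  obtain ⟨c, h1, h2⟩ := h; exact ⟨c, h2, h1⟩

lemma sameTree_trans {f : V → Option V} {a b c : V} (h1 : SameTree f a b)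
    (h2 : SameTree f b c) : SameTree f a c := by
  obtain ⟨u, hau, hbu⟩ := h1
  obtain ⟨v, hbv, hcv⟩ := h2
  rcases anc_total hbu hbv with h | h
  · exact ⟨v, hau.trans h, hcv⟩
  · exact ⟨u, hau, hcv.trans h⟩

lemma sameTree_of_edge {f : V → Option V} {a b : V} (h : f a = some b) : SameTree f a b :=
  ⟨b, Relation.ReflTransGen.single h, Relation.ReflTransGen.refl⟩

/-- combined weight -/
lemma weight_eq (w : V → V → ℝ) (q : ℝ) (f : V → Option V) :
    q ^ nRoots f * fWeight w f = ∏ a : V, (f a).elim q (fun b => w a b) := by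
  have h1 : q ^ nRoots f = ∏ a : V, (if f a = none then q else 1) := by
    rw [Finset.prod_ite, Finset.prod_const, Finset.prod_const_one, mul_one, nRoots]
  rw [h1, fWeight, ← Finset.prod_mul_distrib]
  refine Finset.prod_congr rfl fun a _ => ?_
  rcases h : f a with _ | b <;> simp [h]


set_option linter.unusedSectionVars false

noncomputable def Fterm (E : V → V → Prop) (w : V → V → ℝ) (q : ℝ) (f : V → Option V) : ℝ :=
  if IsRForest E f then ∏ a : V, (f a).elim q (fun b => w a b) else 0

lemma Zf_eq_sum_Fterm (E : V → V → Prop) (w : V → V → ℝ) (q : ℝ) :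
    Zf E w q = ∑ f : V → Option V, Fterm E w q f := by
  rw [Zf, fMeasure, Finset.sum_filter]
  refine Finset.sum_congr rfl fun f _ => ?_
  by_cases h : IsRForest E f
  · simp [Fterm, h, weight_eq]
  · simp [Fterm, h]

def cmk (E : V → V → Prop) (v : V) : (usg E).ConnectedComponent :=
  (usg E).connectedComponentMk v

noncomputable def psi (E : V → V → Prop)
    (g : (c : (usg E).ConnectedComponent) → (c.supp → Option c.supp)) : V → Option V :=
  fun a => Option.map Subtype.val (g (cmk E a) ⟨a, rfl⟩)

lemma psi_eval (E : V → V → Prop) (g) {c : (usg E).ConnectedComponent} (a : V)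
    (ha : a ∈ c.supp) : psi E g a = Option.map Subtype.val (g c ⟨a, ha⟩) := by
  have h : cmk E a = c := ha
  subst h
  rfl

noncomputable def phi (E : V → V → Prop) (f : V → Option V) (c : (usg E).ConnectedComponent) :
    c.supp → Option c.supp :=
  fun a => (f a.1).bind (fun b => if hb : b ∈ c.supp then some ⟨b, hb⟩ else none)

def Respects (E : V → V → Prop) (f : V → Option V) : Prop :=
  ∀ a b : V, f a = some b → cmk E a = cmk E b

lemma respects_of_isRForest {E : V → V → Prop} {f : V → Option V} (hf : IsRForest E f) :
    Respects E f := by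
  intro a b hab
  have hE := hf.2 a b hab
  by_cases h : a = b
  · subst h; exact absurd hab (isForest_no_fix hf.1 a)
  · exact SimpleGraph.ConnectedComponent.eq.mpr (SimpleGraph.Adj.reachable ⟨h, Or.inl hE⟩)

lemma psi_respects (E : V → V → Prop) (g) : Respects E (psi E g) := by
  intro a b hab
  rw [psi_eval E g a (show a ∈ (cmk E a).supp from rfl)] at hab
  cases hg' : g (cmk E a) ⟨a, rfl⟩ with
  | none => rw [hg'] at hab; exact absurd hab (by simp)
  | some b' =>
    rw [hg'] at hab
    have hb : b'.1 = b := by simpa using hab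
    have h2 := b'.2
    rw [SimpleGraph.ConnectedComponent.mem_supp_iff] at h2
    rw [← hb]
    exact h2.symm

lemma phi_psi (E : V → V → Prop) (g) (c : (usg E).ConnectedComponent) :
    phi E (psi E g) c = g c := by
  funext a
  obtain ⟨a, ha⟩ := a
  show (psi E g a).bind _ = _
  rw [psi_eval E g a ha]
  cases hg : g c ⟨a, ha⟩ with
  | none => rfl
  | some b =>
    rw [Option.map_some]
    show Option.bind (some b.1) _ = some b
    rw [Option.bind_some, dif_pos b.2]

lemma psi_phi {E : V → V → Prop} {f : V → Option V} (hf : Respects E f) :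
    psi E (phi E f) = f := by
  funext a
  rw [psi_eval E _ a (show a ∈ (cmk E a).supp from rfl)]
  show Option.map Subtype.val ((f a).bind _) = f a
  cases hfa : f a with
  | none => rfl
  | some b =>
    have hb : b ∈ (cmk E a).supp := (hf a b hfa).symm
    rw [Option.bind_some, dif_pos hb]
    rfl

lemma fstep_psi (E : V → V → Prop) (g) (c : (usg E).ConnectedComponent)
    (o : Option ↥(c.supp)) :
    fstep (psi E g) (Option.map Subtype.val o) = Option.map Subtype.val (fstep (g c) o) := by
  cases o with
  | none => rfl
  | some a => exact psi_eval E g a.1 a.2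

lemma iter_psi (E : V → V → Prop) (g) (c : (usg E).ConnectedComponent) (n : ℕ)
    (o : Option ↥(c.supp)) :
    (fstep (psi E g))^[n] (Option.map Subtype.val o)
      = Option.map Subtype.val ((fstep (g c))^[n] o) := by
  induction n generalizing o with
  | zero => rfl
  | succ n ih => rw [Function.iterate_succ_apply, fstep_psi, ih, Function.iterate_succ_apply]

lemma isRForest_psi (E : V → V → Prop) (g) :
    IsRForest E (psi E g) ↔
      ∀ c : (usg E).ConnectedComponent,
        IsRForest (fun a b : c.supp => E a.1 b.1) (g c) := by
  constructor
  · intro hF c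
    constructor
    · intro a
      obtain ⟨n, hn⟩ := hF.1 a.1
      refine ⟨n, ?_⟩
      have h := iter_psi E g c n (some a)
      rw [show Option.map Subtype.val (some a) = some a.1 from rfl, hn] at h
      exact (Option.map_eq_none_iff.mp h.symm)
    · intro a b hab
      have h : psi E g a.1 = some b.1 := by
        rw [psi_eval E g a.1 a.2, hab]; rfl
      exact hF.2 a.1 b.1 h
  · intro hc
    constructor
    · intro a
      obtain ⟨n, hn⟩ := (hc (cmk E a)).1 ⟨a, rfl⟩
      refine ⟨n, ?_⟩
      have h := iter_psi E g (cmk E a) n (some ⟨a, rfl⟩)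
      rw [hn] at h
      exact h
    · intro a b hab
      rw [psi_eval E g a (show a ∈ (cmk E a).supp from rfl)] at hab
      cases hg : g (cmk E a) ⟨a, rfl⟩ with
      | none => rw [hg] at hab; exact absurd hab (by simp)
      | some b' =>
        rw [hg] at hab
        have hb : b'.1 = b := by simpa using hab
        have h2 : E a b'.1 := (hc (cmk E a)).2 ⟨a, rfl⟩ b' hg
        rwa [hb] at h2

def compEquiv (E : V → V → Prop) :
    (Σ c : (usg E).ConnectedComponent, c.supp) ≃ V where
  toFun p := p.2.1
  invFun v := ⟨cmk E v, ⟨v, rfl⟩⟩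
  left_inv := by
    rintro ⟨c, v, hv⟩
    have h : cmk E v = c := hv
    subst h
    rfl
  right_inv := fun v => rfl

lemma prod_comps (E : V → V → Prop) (h : V → ℝ) :
    ∏ a : V, h a = ∏ c : (usg E).ConnectedComponent, ∏ a : c.supp, h a.1 := by
  rw [← (compEquiv E).prod_comp h, ← Finset.univ_sigma_univ, Finset.prod_sigma]
  rfl

lemma Fterm_psi (E : V → V → Prop) (w : V → V → ℝ) (q : ℝ) (g) :
    Fterm E w q (psi E g) =
      ∏ c : (usg E).ConnectedComponent,
        Fterm (fun a b : c.supp => E a.1 b.1) (fun a b : c.supp => w a.1 b.1) q (g c) := by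
  by_cases h : IsRForest E (psi E g)
  · rw [Fterm, if_pos h]
    have h' := (isRForest_psi E g).mp h
    rw [prod_comps E]
    refine Finset.prod_congr rfl fun c _ => ?_
    rw [Fterm, if_pos (h' c)]
    refine Finset.prod_congr rfl fun a _ => ?_
    rw [psi_eval E g a.1 a.2]
    cases g c a <;> rfl
  · rw [Fterm, if_neg h]
    have : ¬ ∀ c : (usg E).ConnectedComponent,
        IsRForest (fun a b : c.supp => E a.1 b.1) (g c) := fun hh => h ((isRForest_psi E g).mpr hh)
    obtain ⟨c, hc⟩ := not_forall.mp this
    exact (Finset.prod_eq_zero (Finset.mem_univ c) (by rw [Fterm, if_neg hc])).symm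

lemma Zf_eq_ZComps (E : V → V → Prop) (w : V → V → ℝ) (q : ℝ) :
    Zf E w q = ZComps E w q := by
  rw [Zf_eq_sum_Fterm]
  have step1 : ∑ f : V → Option V, Fterm E w q f
      = ∑ f ∈ univ.filter (Respects E), Fterm E w q f := by
    refine (Finset.sum_subset (Finset.filter_subset _ _) fun f _ hf => ?_).symm
    rw [Finset.mem_filter, not_and] at hf
    have : ¬ IsRForest E f := fun h => hf (Finset.mem_univ f) (respects_of_isRForest h)
    rw [Fterm, if_neg this]
  rw [step1]
  have step2 : ∑ f ∈ univ.filter (Respects E), Fterm E w q f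
      = ∑ g : (c : (usg E).ConnectedComponent) → (c.supp → Option c.supp),
          Fterm E w q (psi E g) := by
    refine Finset.sum_bij' (fun f _ => phi E f) (fun g _ => psi E g) ?_ ?_ ?_ ?_ ?_
    · intro f hf; exact Finset.mem_univ _
    · intro g hg
      rw [Finset.mem_filter]
      exact ⟨Finset.mem_univ _, psi_respects E g⟩
    · intro f hf
      exact psi_phi ((Finset.mem_filter.mp hf).2)
    · intro g _
      funext c
      exact phi_psi E g c
    · intro f hf
      rw [psi_phi ((Finset.mem_filter.mp hf).2)]
  rw [step2]
  have step3 : ∑ g : (c : (usg E).ConnectedComponent) → (c.supp → Option c.supp),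
      Fterm E w q (psi E g)
      = ∑ g : (c : (usg E).ConnectedComponent) → (c.supp → Option c.supp),
          ∏ c : (usg E).ConnectedComponent,
            Fterm (fun a b : c.supp => E a.1 b.1) (fun a b : c.supp => w a.1 b.1) q (g c) :=
    Finset.sum_congr rfl fun g _ => Fterm_psi E w q g
  rw [step3]
  symm
  calc ZComps E w q
      = ∏ c : (usg E).ConnectedComponent,
          ∑ gc ∈ (Finset.univ : Finset (c.supp → Option c.supp)),
            Fterm (fun a b : c.supp => E a.1 b.1) (fun a b : c.supp => w a.1 b.1) q gc := by
        refine Finset.prod_congr rfl fun c _ => ?_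
        rw [ZOn]
        have h := Zf_eq_sum_Fterm (fun a b : c.supp => E a.1 b.1)
          (fun a b : c.supp => w a.1 b.1) q
        convert h using 2 <;> exact Subsingleton.elim _ _
    _ = ∑ g ∈ Fintype.piFinset (fun c : (usg E).ConnectedComponent =>
            (Finset.univ : Finset (c.supp → Option c.supp))),
          ∏ c : (usg E).ConnectedComponent,
            Fterm (fun a b : c.supp => E a.1 b.1) (fun a b : c.supp => w a.1 b.1) q (g c) :=
        Finset.prod_univ_sum _ _
    _ = ∑ g : (c : (usg E).ConnectedComponent) → (c.supp → Option c.supp),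
          ∏ c : (usg E).ConnectedComponent,
            Fterm (fun a b : c.supp => E a.1 b.1) (fun a b : c.supp => w a.1 b.1) q (g c) := by
        rw [Fintype.piFinset_univ]


set_option linter.unusedSectionVars false
set_option maxHeartbeats 1000000

lemma walkSeg (E : V → V → Prop) (z : ℕ → V) (d : ℕ)
    (hzadj : ∀ i, 1 ≤ i → i ≤ d → (usg E).Adj (z (i - 1)) (z i)) :
    ∀ (k a : ℕ), a + k ≤ d → ∃ W : (usg E).Walk (z a) (z (a + k)), W.length = k := by
  intro k
  induction k with
  | zero => intro a _; exact ⟨SimpleGraph.Walk.nil, rfl⟩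
  | succ k ih =>
    intro a ha
    have hadj : (usg E).Adj (z a) (z (a + 1)) := by
      have h := hzadj (a + 1) (by omega) (by omega)
      simpa using h
    obtain ⟨W, hW⟩ := ih (a + 1) (by omega)
    refine ⟨SimpleGraph.Walk.cons hadj (W.copy rfl (congrArg z (by omega))), ?_⟩
    simp [hW]

lemma z_inj (E : V → V → Prop) (x y : V) (d : ℕ) (hd : d = (usg E).dist x y)
    (z : ℕ → V) (hz0 : z 0 = x) (hzd : z d = y)
    (hzadj : ∀ i, 1 ≤ i → i ≤ d → (usg E).Adj (z (i - 1)) (z i)) :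
    ∀ a b, a ≤ d → b ≤ d → z a = z b → a = b := by
  have main : ∀ a b, a < b → b ≤ d → z a = z b → False := by
    intro a b hab hbd hz
    obtain ⟨W1, hW1⟩ := walkSeg E z d hzadj a 0 (by omega)
    obtain ⟨W2, hW2⟩ := walkSeg E z d hzadj (d - b) b (by omega)
    have hdist := SimpleGraph.dist_le
      (((W1.copy hz0 (congrArg z (by omega : 0 + a = a))).append
        (W2.copy hz.symm (congrArg z (by omega : b + (d - b) = d)))).copy rfl hzd)
    simp only [SimpleGraph.Walk.length_copy, SimpleGraph.Walk.length_append, hW1, hW2] at hdist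
    omega
  intro a b ha hb hz
  rcases lt_trichotomy a b with h | h | h
  · exact absurd (main a b h hb hz) (fun f => f)
  · exact h
  · exact absurd (main b a h ha hz.symm) (fun f => f)

lemma reachSeg (E' : V → V → Prop) (z : ℕ → V) :
    ∀ (k a : ℕ), (∀ j, a + 1 ≤ j → j ≤ a + k → (usg E').Adj (z (j - 1)) (z j)) →
      (usg E').Reachable (z a) (z (a + k)) := by
  intro k
  induction k with
  | zero => intro a _; exact SimpleGraph.Reachable.refl _
  | succ k ih =>
    intro a hadj
    have h1 : (usg E').Adj (z a) (z (a + 1)) := by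
      have h := hadj (a + 1) (by omega) (by omega)
      simpa using h
    have h2 : (usg E').Reachable (z (a + 1)) (z (a + 1 + k)) := by
      refine ih (a + 1) fun j hj1 hj2 => hadj j (by omega) (by omega)
    have h3 : z (a + 1 + k) = z (a + (k + 1)) := congrArg z (by omega)
    exact (h1.reachable.trans (h3 ▸ h2))

lemma sep (E : V → V → Prop) (htree : (usg E).IsTree) (x y : V) (d : ℕ)
    (hd : d = (usg E).dist x y) (z : ℕ → V) (hz0 : z 0 = x) (hzd : z d = y)
    (hzadj : ∀ i, 1 ≤ i → i ≤ d → (usg E).Adj (z (i - 1)) (z i))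
    (i : ℕ) (hi1 : 1 ≤ i) (hi2 : i ≤ d) :
    ¬ (usg (fun a b => E a b ∧
        ¬((a = z (i - 1) ∧ b = z i) ∨ (a = z i ∧ b = z (i - 1))))).Reachable x y := by
  have hinj := z_inj E x y d hd z hz0 hzd hzadj
  set u := z (i - 1) with hu
  set v := z i with hv
  set E' := fun a b => E a b ∧ ¬((a = u ∧ b = v) ∨ (a = v ∧ b = u)) with hE'
  have hadj : (usg E).Adj u v := hzadj i hi1 hi2
  have hbridge : (usg E).IsBridge s(u, v) :=
    SimpleGraph.isAcyclic_iff_forall_edge_isBridge.mp htree.2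
      ((usg E).mem_edgeSet.mpr hadj)
  have hnr : ¬ ((usg E) \ SimpleGraph.fromEdgeSet {s(u, v)}).Reachable u v :=
    (SimpleGraph.isBridge_iff.mp hbridge)
  have hle : usg E' ≤ (usg E) \ SimpleGraph.fromEdgeSet {s(u, v)} := by
    intro a b hab
    obtain ⟨hne, hor⟩ := hab
    have hEadj : (usg E).Adj a b := ⟨hne, hor.imp (·.1) (·.1)⟩
    rw [SimpleGraph.sdiff_adj]
    refine ⟨hEadj, ?_⟩
    rw [SimpleGraph.fromEdgeSet_adj]
    rintro ⟨hmem, -⟩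
    rw [Set.mem_singleton_iff, Sym2.eq_iff] at hmem
    rcases hor with h | h
    · exact h.2 hmem
    · exact h.2 (by tauto)
  -- adjacency of path edges away from i survives in E'
  have hadj' : ∀ j, 1 ≤ j → j ≤ d → j ≠ i → (usg E').Adj (z (j - 1)) (z j) := by
    intro j hj1 hjd hji
    obtain ⟨hne, hor⟩ := hzadj j hj1 hjd
    have hnm : ¬((z (j - 1) = u ∧ z j = v) ∨ (z (j - 1) = v ∧ z j = u)) := by
      rintro (⟨h1, h2⟩ | ⟨h1, h2⟩)
      · have := hinj (j - 1) (i - 1) (by omega) (by omega) h1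
        omega
      · have e1 := hinj (j - 1) i (by omega) (by omega) h1
        have e2 := hinj j (i - 1) (by omega) (by omega) h2
        omega
    have hnm' : ¬((z j = u ∧ z (j - 1) = v) ∨ (z j = v ∧ z (j - 1) = u)) := by tauto
    exact ⟨hne, hor.imp (fun h => ⟨h, hnm⟩) (fun h => ⟨h, hnm'⟩)⟩
  have hr1 : (usg E').Reachable (z 0) (z (i - 1)) := by
    have := reachSeg E' z (i - 1) 0 (fun j hj1 hj2 => hadj' j (by omega) (by omega) (by omega))
    simpa using this
  have hr2 : (usg E').Reachable (z i) (z d) := by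
    have := reachSeg E' z (d - i) i (fun j hj1 hj2 => hadj' j (by omega) (by omega) (by omega))
    have hzz : z (i + (d - i)) = z d := congrArg z (by omega)
    exact hzz ▸ this
  intro hreach
  have : (usg E').Reachable u v := by
    have hxu : (usg E').Reachable x u := hz0 ▸ hr1
    have hyv : (usg E').Reachable y v := (hzd ▸ hr2).symm
    exact (hxu.symm.trans hreach).trans hyv
  exact hnr (this.mono hle)

lemma notSameTree_iff (E : V → V → Prop) (htree : (usg E).IsTree) (x y : V) (d : ℕ)
    (hd : d = (usg E).dist x y) (z : ℕ → V) (hz0 : z 0 = x) (hzd : z d = y)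
    (hzadj : ∀ i, 1 ≤ i → i ≤ d → (usg E).Adj (z (i - 1)) (z i))
    (f : V → Option V) (hf : IsRForest E f) :
    (¬ SameTree f x y) ↔
      ∃ i ∈ Finset.Icc 1 d, (f (z (i - 1)) ≠ some (z i) ∧ f (z i) ≠ some (z (i - 1))) := by
  constructor
  · intro hns
    by_contra hno
    push_neg at hno
    have step : ∀ i, 1 ≤ i → i ≤ d → SameTree f (z (i - 1)) (z i) := by
      intro i h1 h2
      have h := hno i (Finset.mem_Icc.mpr ⟨h1, h2⟩)
      by_cases he : f (z (i - 1)) = some (z i)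
      · exact sameTree_of_edge he
      · exact sameTree_symm (sameTree_of_edge (h he))
    have chain : ∀ k, k ≤ d → SameTree f x (z k) := by
      intro k
      induction k with
      | zero => intro _; rw [hz0]; exact sameTree_refl f x
      | succ k ih =>
        intro hk
        have h1 := step (k + 1) (by omega) hk
        simp only [Nat.add_sub_cancel] at h1
        exact sameTree_trans (ih (by omega)) h1
    exact hns (hzd ▸ chain d le_rfl)
  · rintro ⟨i, hi, hcut⟩ hsame
    obtain ⟨hi1, hi2⟩ := Finset.mem_Icc.mp hi
    obtain ⟨c, hxc, hyc⟩ := hsame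
    set E' := fun a b => E a b ∧
      ¬((a = z (i - 1) ∧ b = z i) ∨ (a = z i ∧ b = z (i - 1))) with hE'
    have hadj' : ∀ a b, f a = some b → (usg E').Adj a b := by
      intro a b hab
      have hE := hf.2 a b hab
      have hne : a ≠ b := fun h => isForest_no_fix hf.1 a (h ▸ hab)
      refine ⟨hne, Or.inl ⟨hE, ?_⟩⟩
      rintro (⟨ha, hb⟩ | ⟨ha, hb⟩)
      · rw [ha, hb] at hab; exact hcut.1 hab
      · rw [ha, hb] at hab; exact hcut.2 hab
    have hr : ∀ a b, anc f a b → (usg E').Reachable a b := by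
      intro a b h
      induction h with
      | refl => exact SimpleGraph.Reachable.refl _
      | tail h₁ h₂ ih => exact ih.trans (hadj' _ _ h₂).reachable
    exact sep E htree x y d hd z hz0 hzd hzadj i hi1 hi2
      ((hr x c hxc).trans (hr y c hyc).symm)


set_option linter.unusedSectionVars false
set_option maxHeartbeats 1000000

noncomputable def ind (P : Prop) : ℝ := if P then 1 else 0

lemma ind_pos {P : Prop} (h : P) : ind P = 1 := if_pos h
lemma ind_neg {P : Prop} (h : ¬P) : ind P = 0 := if_neg h
lemma ind_congr {P Q : Prop} (h : P ↔ Q) : ind P = ind Q := by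
  unfold ind; exact if_congr h rfl rfl

lemma pointIE (s : Finset ℕ) (p : ℕ → Prop) :
    ind (∃ i ∈ s, p i)
      = ∑ I ∈ s.powerset,
          (if I = ∅ then 0 else (-1 : ℝ) ^ (I.card + 1) * ind (∀ i ∈ I, p i)) := by
  classical
  set T := s.filter p with hT
  have hsub : T.powerset ⊆ s.powerset := Finset.powerset_mono.mpr (Finset.filter_subset p s)
  have hvanish : ∀ I ∈ s.powerset, I ∉ T.powerset →
      (if I = ∅ then (0 : ℝ) else (-1 : ℝ) ^ (I.card + 1) * ind (∀ i ∈ I, p i)) = 0 := by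
    intro I hIs hIT
    by_cases h0 : I = ∅
    · rw [if_pos h0]
    · rw [if_neg h0]
      have hnall : ¬ ∀ i ∈ I, p i := by
        intro hall
        apply hIT
        rw [Finset.mem_powerset] at hIs ⊢
        intro j hj
        rw [hT, Finset.mem_filter]
        exact ⟨hIs hj, hall j hj⟩
      rw [ind_neg hnall, mul_zero]
  rw [← Finset.sum_subset hsub hvanish]
  have hcong : ∀ I ∈ T.powerset,
      (if I = ∅ then (0 : ℝ) else (-1 : ℝ) ^ (I.card + 1) * ind (∀ i ∈ I, p i))
      = (-1 : ℝ) ^ (I.card + 1) + (if I = ∅ then 1 else 0) := by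
    intro I hI
    have hall : ∀ i ∈ I, p i := by
      intro j hj
      have hj2 := (Finset.mem_powerset.mp hI) hj
      rw [hT, Finset.mem_filter] at hj2
      exact hj2.2
    rw [ind_pos hall, mul_one]
    by_cases h0 : I = ∅
    · subst h0; simp
    · rw [if_neg h0, if_neg h0, add_zero]
  rw [Finset.sum_congr rfl hcong, Finset.sum_add_distrib]
  have h1 : ∑ I ∈ T.powerset, (-1 : ℝ) ^ (I.card + 1) = - (if T = ∅ then 1 else 0) := by
    have hz : (∑ m ∈ T.powerset, (-1 : ℤ) ^ m.card) = if T = ∅ then 1 else 0 :=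
      Finset.sum_powerset_neg_one_pow_card
    have h3 : ∑ I ∈ T.powerset, (-1 : ℝ) ^ (I.card + 1)
        = - ∑ I ∈ T.powerset, (-1 : ℝ) ^ I.card := by
      rw [← Finset.sum_neg_distrib]
      refine Finset.sum_congr rfl fun I _ => ?_
      rw [pow_succ]
      ring
    rw [h3]
    congr 1
    have h4 := congrArg (fun n : ℤ => (n : ℝ)) hz
    push_cast at h4
    rw [h4]
  have h2 : ∑ I ∈ T.powerset, (if I = ∅ then (1 : ℝ) else 0) = 1 := by
    rw [Finset.sum_ite_eq' T.powerset (∅ : Finset ℕ) (fun _ => (1 : ℝ))]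
    simp
  rw [h1, h2]
  have hTne : (∃ i ∈ s, p i) ↔ T ≠ ∅ := by
    rw [hT, ← Finset.filter_nonempty_iff, Finset.nonempty_iff_ne_empty]
  by_cases h0 : T = ∅
  · have hl : ¬ ∃ i ∈ s, p i := fun h => (hTne.mp h) h0
    rw [ind_neg hl, if_pos h0]
    norm_num
  · rw [ind_pos (hTne.mpr h0), if_neg h0]
    norm_num

lemma fMeasure_indicator (E : V → V → Prop) (w : V → V → ℝ) (q : ℝ)
    (H : Set (V → Option V)) :
    fMeasure E w q H
      = ∑ f ∈ univ.filter (fun f : V → Option V => IsRForest E f),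
          (q ^ nRoots f * fWeight w f) * ind (f ∈ H) := by
  rw [fMeasure, ← Finset.filter_filter, Finset.sum_filter]
  refine Finset.sum_congr rfl fun f _ => ?_
  by_cases h : f ∈ H <;> simp [h, ind]

lemma fMeasure_IE (E : V → V → Prop) (w : V → V → ℝ) (q : ℝ) (d : ℕ)
    (A : ℕ → (V → Option V) → Prop) :
    fMeasure E w q {f | ∃ i ∈ Finset.Icc 1 d, A i f}
      = ∑ I ∈ (Finset.Icc 1 d).powerset,
          (if I = ∅ then 0
            else (-1 : ℝ) ^ (I.card + 1) * fMeasure E w q {f | ∀ i ∈ I, A i f}) := by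
  rw [fMeasure_indicator]
  have step1 : ∀ f ∈ univ.filter (fun f : V → Option V => IsRForest E f),
      (q ^ nRoots f * fWeight w f) * ind (f ∈ {f | ∃ i ∈ Finset.Icc 1 d, A i f})
      = ∑ I ∈ (Finset.Icc 1 d).powerset,
          (q ^ nRoots f * fWeight w f) *
            (if I = ∅ then 0
              else (-1 : ℝ) ^ (I.card + 1) * ind (∀ i ∈ I, A i f)) := by
    intro f _
    rw [ind_congr (show (f ∈ {f | ∃ i ∈ Finset.Icc 1 d, A i f})
        ↔ (∃ i ∈ Finset.Icc 1 d, A i f) from Iff.rfl),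
      pointIE (Finset.Icc 1 d) (fun i => A i f), Finset.mul_sum]
  rw [Finset.sum_congr rfl step1, Finset.sum_comm]
  refine Finset.sum_congr rfl fun I _ => ?_
  by_cases h0 : I = ∅
  · simp [h0]
  · rw [if_neg h0, fMeasure_indicator, Finset.mul_sum]
    refine Finset.sum_congr rfl fun f _ => ?_
    rw [ind_congr (show (f ∈ {f | ∀ i ∈ I, A i f}) ↔ (∀ i ∈ I, A i f) from Iff.rfl),
      if_neg h0]
    ring


set_option linter.unusedSectionVars false
set_option maxHeartbeats 1000000

lemma ind_mul_ind (P Q : Prop) : ind P * ind Q = ind (P ∧ Q) := by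
  by_cases hp : P <;> by_cases hq : Q <;>
    simp [ind_pos, ind_neg, hp, hq, ind]

lemma fMeasure_ind2 (E : V → V → Prop) (w : V → V → ℝ) (q : ℝ)
    (H : Set (V → Option V)) :
    fMeasure E w q H
      = ∑ f : V → Option V,
          (q ^ nRoots f * fWeight w f) * (ind (IsRForest E f) * ind (f ∈ H)) := by
  rw [fMeasure_indicator, Finset.sum_filter]
  refine Finset.sum_congr rfl fun f _ => ?_
  by_cases h : IsRForest E f <;> simp [h, ind_pos, ind_neg]

lemma fMeasure_cut_eq_Zf (E : V → V → Prop) (w : V → V → ℝ) (q : ℝ) (z : ℕ → V)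
    (I : Finset ℕ) :
    fMeasure E w q {f | ∀ i ∈ I, f (z (i - 1)) ≠ some (z i) ∧ f (z i) ≠ some (z (i - 1))}
      = Zf (fun a b => E a b ∧
          ∀ i ∈ I, ¬((a = z (i - 1) ∧ b = z i) ∨ (a = z i ∧ b = z (i - 1)))) w q := by
  rw [fMeasure_ind2, Zf, fMeasure_ind2]
  refine Finset.sum_congr rfl fun f _ => ?_
  apply congrArg
  rw [ind_mul_ind, ind_mul_ind]
  apply ind_congr
  constructor
  · rintro ⟨hf, hcut⟩
    refine ⟨⟨hf.1, fun a b hab => ⟨hf.2 a b hab, ?_⟩⟩, trivial⟩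
    intro i hi
    rintro (⟨ha, hb⟩ | ⟨ha, hb⟩)
    · rw [ha, hb] at hab; exact (hcut i hi).1 hab
    · rw [ha, hb] at hab; exact (hcut i hi).2 hab
  · rintro ⟨hf, -⟩
    refine ⟨⟨hf.1, fun a b hab => (hf.2 a b hab).1⟩, ?_⟩
    intro i hi
    exact ⟨fun he => (hf.2 _ _ he).2 i hi (Or.inl ⟨rfl, rfl⟩),
      fun he => (hf.2 _ _ he).2 i hi (Or.inr ⟨rfl, rfl⟩)⟩

lemma regroup (d : ℕ) (g : Finset ℕ → ℝ) :
    ∑ I ∈ (Finset.Icc 1 d).powerset, (if I = ∅ then 0 else (-1 : ℝ) ^ (I.card + 1) * g I)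
      = ∑ k ∈ Finset.Icc 1 d, (-1 : ℝ) ^ (k + 1) *
          ∑ I ∈ (Finset.Icc 1 d).powersetCard k, g I := by
  rw [Finset.sum_powerset]
  have hcard : (Finset.Icc 1 d).card = d := by rw [Nat.card_Icc]; omega
  rw [hcard]
  have hins : Finset.range (d + 1) = insert 0 (Finset.Icc 1 d) := by
    ext j
    simp only [Finset.mem_range, Finset.mem_insert, Finset.mem_Icc]
    omega
  rw [hins, Finset.sum_insert (by simp)]
  have h0 : ∑ I ∈ Finset.powersetCard 0 (Finset.Icc 1 d),
      (if I = ∅ then (0 : ℝ) else (-1 : ℝ) ^ (I.card + 1) * g I) = 0 := by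
    rw [Finset.powersetCard_zero, Finset.sum_singleton, if_pos rfl]
  rw [h0, zero_add]
  refine Finset.sum_congr rfl fun k hk => ?_
  rw [Finset.mul_sum]
  refine Finset.sum_congr rfl fun I hI => ?_
  have hIcard : I.card = k := (Finset.mem_powersetCard.mp hI).2
  have hk1 : 1 ≤ k := (Finset.mem_Icc.mp hk).1
  have hne : I ≠ ∅ := by
    intro h
    rw [h, Finset.card_empty] at hIcard
    omega
  rw [if_neg hne, hIcard]

lemma mainEq (E : V → V → Prop) (w : V → V → ℝ) (q : ℝ) (htree : (usg E).IsTree)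
    (x y : V) (d : ℕ) (hd : d = (usg E).dist x y)
    (z : ℕ → V) (hz0 : z 0 = x) (hzd : z d = y)
    (hzadj : ∀ i, 1 ≤ i → i ≤ d → (usg E).Adj (z (i - 1)) (z i)) :
    fMeasure E w q {f | ¬ SameTree f x y}
      = ∑ k ∈ Finset.Icc 1 d, (-1 : ℝ) ^ (k + 1) *
          ∑ I ∈ (Finset.Icc 1 d).powersetCard k,
            ZComps (fun a b => E a b ∧
              ∀ i ∈ I, ¬((a = z (i - 1) ∧ b = z i) ∨ (a = z i ∧ b = z (i - 1)))) w q := by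
  have h1 : fMeasure E w q {f | ¬ SameTree f x y}
      = fMeasure E w q {f | ∃ i ∈ Finset.Icc 1 d,
          f (z (i - 1)) ≠ some (z i) ∧ f (z i) ≠ some (z (i - 1))} := by
    rw [fMeasure_ind2, fMeasure_ind2]
    refine Finset.sum_congr rfl fun f _ => ?_
    apply congrArg
    rw [ind_mul_ind, ind_mul_ind]
    exact ind_congr (and_congr_right fun hf =>
      notSameTree_iff E htree x y d hd z hz0 hzd hzadj f hf)
  rw [h1, fMeasure_IE E w q d
    (fun i f => f (z (i - 1)) ≠ some (z i) ∧ f (z i) ≠ some (z (i - 1)))]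
  have h2 : ∀ I ∈ (Finset.Icc 1 d).powerset,
      (if I = ∅ then (0:ℝ)
        else (-1 : ℝ) ^ (I.card + 1) * fMeasure E w q
          {f | ∀ i ∈ I, f (z (i - 1)) ≠ some (z i) ∧ f (z i) ≠ some (z (i - 1))})
      = (if I = ∅ then (0:ℝ)
        else (-1 : ℝ) ^ (I.card + 1) * ZComps (fun a b => E a b ∧
          ∀ i ∈ I, ¬((a = z (i - 1) ∧ b = z i) ∨ (a = z i ∧ b = z (i - 1)))) w q) := by
    intro I _
    by_cases h0 : I = ∅
    · rw [if_pos h0, if_pos h0]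
    · rw [if_neg h0, if_neg h0, fMeasure_cut_eq_Zf E w q z I, Zf_eq_ZComps]
  rw [Finset.sum_congr rfl h2]
  exact regroup d (fun I => ZComps (fun a b => E a b ∧
    ∀ i ∈ I, ¬((a = z (i - 1) ∧ b = z i) ∨ (a = z i ∧ b = z (i - 1)))) w q)

lemma two_comps (E : V → V → Prop) (w : V → V → ℝ) (q : ℝ) (htree : (usg E).IsTree)
    (x y : V)
    (hnr : ¬ (usg (fun a b => E a b ∧
        ¬((a = x ∧ b = y) ∨ (a = y ∧ b = x)))).Reachable x y) :
    ZComps (fun a b => E a b ∧ ¬((a = x ∧ b = y) ∨ (a = y ∧ b = x))) w q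
      = ZOn (fun a b => E a b ∧ ¬((a = x ∧ b = y) ∨ (a = y ∧ b = x))) w
          ((usg fun a b => E a b ∧
            ¬((a = x ∧ b = y) ∨ (a = y ∧ b = x))).connectedComponentMk x).supp q *
        ZOn (fun a b => E a b ∧ ¬((a = x ∧ b = y) ∨ (a = y ∧ b = x))) w
          ((usg fun a b => E a b ∧
            ¬((a = x ∧ b = y) ∨ (a = y ∧ b = x))).connectedComponentMk y).supp q := by
  set E' := fun a b => E a b ∧ ¬((a = x ∧ b = y) ∨ (a = y ∧ b = x)) with hE'
  have claim1 : ∀ v : V, (usg E').Reachable v x ∨ (usg E').Reachable v y := by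
    have key : ∀ (v t : V) (W : (usg E).Walk v t), t = x →
        (usg E').Reachable v x ∨ (usg E').Reachable v y := by
      intro v t W
      induction W with
      | nil =>
        intro h
        subst h
        exact Or.inl (SimpleGraph.Reachable.refl _)
      | @cons u v' t' hadj p ih =>
        intro h
        rcases ih h with hreach | hreach
        all_goals {
          by_cases he : (u = x ∧ v' = y) ∨ (u = y ∧ v' = x)
          · rcases he with ⟨h1, -⟩ | ⟨h1, -⟩
            · rw [h1]; exact Or.inl (SimpleGraph.Reachable.refl _)
            · rw [h1]; exact Or.inr (SimpleGraph.Reachable.refl _)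
          · have hne2 : ¬((v' = x ∧ u = y) ∨ (v' = y ∧ u = x)) := by tauto
            have hadj' : (usg E').Adj u v' := by
              obtain ⟨hne, hor⟩ := hadj
              exact ⟨hne, hor.imp (fun hE => ⟨hE, he⟩) (fun hE => ⟨hE, hne2⟩)⟩
            first
              | exact Or.inl (hadj'.reachable.trans hreach)
              | exact Or.inr (hadj'.reachable.trans hreach)
        }
    intro v
    obtain ⟨W⟩ := htree.isConnected.preconnected v x
    exact key v x W rfl
  have hdist : (usg E').connectedComponentMk x ≠ (usg E').connectedComponentMk y :=
    fun h => hnr (SimpleGraph.ConnectedComponent.eq.mp h)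
  have huniv : (Finset.univ : Finset (usg E').ConnectedComponent)
      = {(usg E').connectedComponentMk x, (usg E').connectedComponentMk y} := by
    ext c
    simp only [Finset.mem_univ, Finset.mem_insert, Finset.mem_singleton, true_iff]
    refine c.ind (fun v => ?_)
    rcases claim1 v with h | h
    · exact Or.inl (SimpleGraph.ConnectedComponent.sound h)
    · exact Or.inr (SimpleGraph.ConnectedComponent.sound h)
  rw [ZComps, huniv, Finset.prod_pair hdist]


/-- **Inclusion-exclusion for the 2-point correlation on trees.** Here `z 0 = x, …, z d = y`
is the path between `x` and `y`; `G_I` is obtained from `G` by removing, for `i ∈ I`, all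
edges between `z (i-1)` and `z i`, and the product of the partition functions of the
`|I|+1` components of `G_I` is `ZComps` of `G_I`. -/
theorem inclusion_exclusion_two_point_tree (E : V → V → Prop) (w : V → V → ℝ)
    (hw : ∀ a b : V, 0 ≤ w a b) (htree : (usg E).IsTree)
    (x y : V) (d : ℕ) (hd : d = (usg E).dist x y)
    (z : ℕ → V) (hz0 : z 0 = x) (hzd : z d = y)
    (hzadj : ∀ i, 1 ≤ i → i ≤ d → (usg E).Adj (z (i - 1)) (z i))
    (q : ℝ) (hq : 0 < q) :
    Ucorr E w q x y =
      (1 / Zf E w q) *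
        ∑ k ∈ Finset.Icc 1 d, (-1 : ℝ) ^ (k + 1) *
          ∑ I ∈ (Finset.Icc 1 d).powersetCard k,
            ZComps (fun a b => E a b ∧
              ∀ i ∈ I, ¬((a = z (i - 1) ∧ b = z i) ∨ (a = z i ∧ b = z (i - 1)))) w q ∧
    (d = 1 →
      Ucorr E w q x y =
        ZOn (fun a b => E a b ∧ ¬((a = x ∧ b = y) ∨ (a = y ∧ b = x))) w
            ((usg fun a b => E a b ∧
              ¬((a = x ∧ b = y) ∨ (a = y ∧ b = x))).connectedComponentMk x).supp q *
          ZOn (fun a b => E a b ∧ ¬((a = x ∧ b = y) ∨ (a = y ∧ b = x))) w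
            ((usg fun a b => E a b ∧
              ¬((a = x ∧ b = y) ∨ (a = y ∧ b = x))).connectedComponentMk y).supp q /
          Zf E w q) := by
  constructor
  · rw [Ucorr, fProb, mainEq E w q htree x y d hd z hz0 hzd hzadj]
    ring
  · intro hd1
    subst hd1
    rw [Ucorr, fProb]
    have hm := mainEq E w q htree x y 1 hd z hz0 hzd hzadj
    rw [Finset.Icc_self, Finset.sum_singleton] at hm
    have hps : (({1} : Finset ℕ)).powersetCard 1 = {{1}} := by
      have hc : (({1} : Finset ℕ)).card = 1 := Finset.card_singleton 1
      conv_lhs => rw [← hc]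
      exact Finset.powersetCard_self {1}
    rw [hps, Finset.sum_singleton] at hm
    have hE : (fun a b => E a b ∧ ∀ i ∈ ({1} : Finset ℕ),
        ¬((a = z (i - 1) ∧ b = z i) ∨ (a = z i ∧ b = z (i - 1))))
        = (fun a b : V => E a b ∧ ¬((a = x ∧ b = y) ∨ (a = y ∧ b = x))) := by
      funext a b
      apply propext
      simp only [Finset.mem_singleton, forall_eq, Nat.sub_self, hz0, hzd]
    rw [hE] at hm
    have hnr : ¬ (usg (fun a b => E a b ∧
        ¬((a = x ∧ b = y) ∨ (a = y ∧ b = x)))).Reachable x y := by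
      have hs := sep E htree x y 1 hd z hz0 hzd hzadj 1 le_rfl le_rfl
      rw [show (1 : ℕ) - 1 = 0 from Nat.sub_self 1, hz0, hzd] at hs
      exact hs
    rw [hm, two_comps E w q htree x y hnr]
    ring

end
end

section
/- Let BG_{n,m} be the bottleneck graph: the undirected graph consisting of two disjoint complete graphs on n and m vertices, connected by a single bridge edge, where the bridge has weight w>0 and all other edges have weight 1. Then its partition function is Z(q) = q·( q(q+n)(q+m) + w(q+1)(2q+n+m) )·(q+n)^{n−2}·(q+m)^{m−2}. -/
open Classical Finset

noncomputable section

/-- The graph Laplacian `L = A - D` of the weighted directed graph with edge relation `E`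
and weights `w`: `A x y = w x y · 1_{E x y, x ≠ y}` and `D` is the diagonal matrix of
total outgoing weights. -/
def lapOf {V : Type*} [Fintype V] [DecidableEq V] (E : V → V → Prop) (w : V → V → ℝ) :
    Matrix V V ℝ := fun x y =>
  (if E x y ∧ x ≠ y then w x y else 0) -
    (if x = y then ∑ z : V, (if E x z ∧ x ≠ z then w x z else 0) else 0)

/-- The partition function `Z(q) = det (q·I - L)` (matrix-forest theorem). -/
def Zdet {V : Type*} [Fintype V] [DecidableEq V] (E : V → V → Prop) (w : V → V → ℝ)
    (q : ℝ) : ℝ := (q • (1 : Matrix V V ℝ) - lapOf E w).det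

/-- The path graph on `n` vertices: `i` and `i+1` are adjacent. -/
def pathAdj (n : ℕ) : Fin n → Fin n → Prop := fun i j =>
  (i : ℕ) + 1 = (j : ℕ) ∨ (j : ℕ) + 1 = (i : ℕ)

/-- The bottleneck graph `BG_{n,m}`: two disjoint cliques, on the vertices with labels
`< n` and on those with labels `≥ n`, joined by the single bridge edge between the
vertices with labels `n-1` and `n`. -/
def bgAdj (n m : ℕ) : Fin (n + m) → Fin (n + m) → Prop := fun i j =>
  i ≠ j ∧ (((i : ℕ) < n ∧ (j : ℕ) < n) ∨ (n ≤ (i : ℕ) ∧ n ≤ (j : ℕ)) ∨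
    ((i : ℕ) = n - 1 ∧ (j : ℕ) = n) ∨ ((i : ℕ) = n ∧ (j : ℕ) = n - 1))

/-- Weight function of the bottleneck graph: intra-clique edges have weight `1`, the
bridge has weight `wv`. -/
def bgW (n m : ℕ) (wv : ℝ) : Fin (n + m) → Fin (n + m) → ℝ := fun i j =>
  if ((i : ℕ) < n ∧ (j : ℕ) < n) ∨ (n ≤ (i : ℕ) ∧ n ≤ (j : ℕ)) then 1 else wv

lemma sumIndLt (n m : ℕ) (c : ℝ) :
    ∑ z : Fin (n + m), (if (z : ℕ) < n then c else 0) = n * c := by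
  rw [Fin.sum_univ_add]
  simp [Fin.is_lt]

lemma sumIndGe (n m : ℕ) (c : ℝ) :
    ∑ z : Fin (n + m), (if n ≤ (z : ℕ) then c else 0) = m * c := by
  rw [Fin.sum_univ_add]
  rw [Finset.sum_eq_zero (fun (x : Fin n) _ => by simp [Nat.not_le.mpr x.is_lt])]
  simp

lemma sumIndEq (n m k : ℕ) (hk : k < n + m) (c : ℝ) :
    ∑ z : Fin (n + m), (if (z : ℕ) = k then c else 0) = c := by
  rw [Fin.sum_univ_eq_sum_range (fun i => if i = k then c else 0)]
  simp [Finset.sum_ite_eq', hk]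

lemma deg_eq (n m : ℕ) (hn : 1 ≤ n) (hm : 1 ≤ m) (w : ℝ) (x : Fin (n + m)) :
    ∑ z : Fin (n + m), (if bgAdj n m x z ∧ x ≠ z then bgW n m w x z else 0)
      = (if (x : ℕ) < n then (n : ℝ) - 1 else (m : ℝ) - 1)
        + (if (x : ℕ) = n - 1 then w else 0) + (if (x : ℕ) = n then w else 0) := by
  have key : ∀ z : Fin (n + m),
      (if bgAdj n m x z ∧ x ≠ z then bgW n m w x z else 0) =
      (if (x : ℕ) < n then (if (z : ℕ) < n then (1:ℝ) else 0)
        else (if n ≤ (z : ℕ) then 1 else 0))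
      - (if (z : ℕ) = (x : ℕ) then 1 else 0)
      + (if (x : ℕ) = n - 1 then (if (z : ℕ) = n then w else 0) else 0)
      + (if (x : ℕ) = n then (if (z : ℕ) = n - 1 then w else 0) else 0) := by
    intro z
    simp only [bgAdj, bgW, ne_eq, Fin.ext_iff]
    split_ifs <;> first | (exfalso; omega) | norm_num
  rw [Finset.sum_congr rfl (fun z _ => key z)]
  simp only [Finset.sum_add_distrib, Finset.sum_sub_distrib]
  split_ifs <;>
    first
      | (exfalso; omega)
      | (simp only [sumIndLt n m 1, sumIndGe n m 1, sumIndEq n m (↑x) x.is_lt 1,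
          sumIndEq n m n (by omega) w, sumIndEq n m (n-1) (by omega) w,
          Finset.sum_const_zero]; ring)

def dvec (n m : ℕ) (q : ℝ) : Fin (n + m) → ℝ := fun x =>
  if (x : ℕ) < n then q + n else q + m

def Umat (n m : ℕ) : Matrix (Fin (n + m)) (Fin 3) ℝ := fun x j =>
  ![(if (x : ℕ) < n then (1:ℝ) else 0), (if n ≤ (x : ℕ) then 1 else 0),
    (if (x : ℕ) = n - 1 then 1 else 0) - (if (x : ℕ) = n then 1 else 0)] j

def Vmat (n m : ℕ) (w : ℝ) : Matrix (Fin 3) (Fin (n + m)) ℝ := fun i y =>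
  ![-(if (y : ℕ) < n then (1:ℝ) else 0), -(if n ≤ (y : ℕ) then 1 else 0),
    w * ((if (y : ℕ) = n - 1 then 1 else 0) - (if (y : ℕ) = n then 1 else 0))] i

set_option maxHeartbeats 2000000 in
lemma decomp (n m : ℕ) (hn : 1 ≤ n) (hm : 1 ≤ m) (w q : ℝ) :
    q • (1 : Matrix (Fin (n + m)) (Fin (n + m)) ℝ) - lapOf (bgAdj n m) (bgW n m w)
      = Matrix.diagonal (dvec n m q) + Umat n m * Vmat n m w := by
  apply Matrix.ext
  intro x y
  rw [Matrix.sub_apply, Matrix.smul_apply, Matrix.add_apply, Matrix.mul_apply,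
    Fin.sum_univ_three]
  show q • (1 : Matrix (Fin (n+m)) (Fin (n+m)) ℝ) x y -
      ((if bgAdj n m x y ∧ x ≠ y then bgW n m w x y else 0) -
        (if x = y then ∑ z, (if bgAdj n m x z ∧ x ≠ z then bgW n m w x z else 0) else 0)) = _
  rw [deg_eq n m hn hm w x]
  simp only [Matrix.one_apply, Matrix.diagonal_apply, smul_eq_mul, mul_ite,
    Umat, Vmat, dvec, Matrix.cons_val_zero, Matrix.cons_val_one, Matrix.head_cons,
    Matrix.cons_val_two, Matrix.tail_cons]
  by_cases hxy : x = y
  · subst hxy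
    simp only [if_pos rfl, bgAdj, ne_eq, not_true_eq_false, and_false, false_and, if_false]
    split_ifs <;> first | (exfalso; omega) | ring
  · rw [if_neg hxy, if_neg hxy, if_neg hxy]
    have hxy' : (x : ℕ) ≠ (y : ℕ) := fun h => hxy (Fin.ext h)
    simp only [bgAdj, bgW, ne_eq, Fin.ext_iff]
    split_ifs <;> first | (exfalso; omega) | ring

set_option maxHeartbeats 1000000 in
lemma det3 (n m : ℕ) (hn : 1 ≤ n) (hm : 1 ≤ m) (w q : ℝ) :
    Matrix.det ((1 : Matrix (Fin 3) (Fin 3) ℝ) +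
        Vmat n m w * (Matrix.diagonal (fun x => (dvec n m q x)⁻¹) * Umat n m))
      = (1 - n * (q + n)⁻¹) * (1 - m * (q + m)⁻¹) * (1 + w * (q + n)⁻¹ + w * (q + m)⁻¹)
        + (1 - n * (q + n)⁻¹) * w * ((q + m)⁻¹ * (q + m)⁻¹)
        + (1 - m * (q + m)⁻¹) * w * ((q + n)⁻¹ * (q + n)⁻¹) := by
  have mul_entry : ∀ i j : Fin 3,
      (Vmat n m w * (Matrix.diagonal (fun x => (dvec n m q x)⁻¹) * Umat n m)) i j
        = ∑ z : Fin (n + m), Vmat n m w i z * ((dvec n m q z)⁻¹ * Umat n m z j) := by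
    intro i j
    rw [Matrix.mul_apply]
    exact Finset.sum_congr rfl fun z _ => by rw [Matrix.diagonal_mul]
  set X := (1 : Matrix (Fin 3) (Fin 3) ℝ) +
      Vmat n m w * (Matrix.diagonal (fun x => (dvec n m q x)⁻¹) * Umat n m) with hX
  have entry : ∀ i j : Fin 3, X i j
      = (if i = j then 1 else 0) + ∑ z : Fin (n + m), Vmat n m w i z * ((dvec n m q z)⁻¹ * Umat n m z j) := by
    intro i j
    rw [hX, Matrix.add_apply, mul_entry, Matrix.one_apply]
  have h00 : X 0 0 = 1 + ↑n * (-(q + ↑n)⁻¹) := by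
    rw [entry, Finset.sum_congr rfl (fun (z : Fin (n+m)) _ =>
      show Vmat n m w 0 z * ((dvec n m q z)⁻¹ * Umat n m z 0)
          = (if (z : ℕ) < n then -(q + ↑n)⁻¹ else 0) from by
        simp only [Vmat, Umat, dvec, Matrix.cons_val_zero]
        split_ifs <;> ring), sumIndLt n m _]
    rw [if_pos rfl]
  have h01 : X 0 1 = 0 := by
    rw [entry, Finset.sum_eq_zero (fun (z : Fin (n+m)) _ => by
      simp only [Vmat, Umat, dvec, Matrix.cons_val_zero, Matrix.cons_val_one, Matrix.head_cons]
      split_ifs <;> first | (exfalso; omega) | ring)]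
    rw [if_neg (by decide)]; ring
  have h02 : X 0 2 = -(q + ↑n)⁻¹ := by
    rw [entry, Finset.sum_congr rfl (fun (z : Fin (n+m)) _ =>
      show Vmat n m w 0 z * ((dvec n m q z)⁻¹ * Umat n m z 2)
          = (if (z : ℕ) = n - 1 then -(q + ↑n)⁻¹ else 0) from by
        simp only [Vmat, Umat, dvec, Matrix.cons_val_zero, Matrix.cons_val_two, Matrix.tail_cons, Matrix.head_cons]
        split_ifs <;> first | (exfalso; omega) | ring), sumIndEq n m (n-1) (by omega) _]
    rw [if_neg (by decide)]; ring
  have h10 : X 1 0 = 0 := by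
    rw [entry, Finset.sum_eq_zero (fun (z : Fin (n+m)) _ => by
      simp only [Vmat, Umat, dvec, Matrix.cons_val_zero, Matrix.cons_val_one, Matrix.head_cons]
      split_ifs <;> first | (exfalso; omega) | ring)]
    rw [if_neg (by decide)]; ring
  have h11 : X 1 1 = 1 + ↑m * (-(q + ↑m)⁻¹) := by
    rw [entry, Finset.sum_congr rfl (fun (z : Fin (n+m)) _ =>
      show Vmat n m w 1 z * ((dvec n m q z)⁻¹ * Umat n m z 1)
          = (if n ≤ (z : ℕ) then -(q + ↑m)⁻¹ else 0) from by
        simp only [Vmat, Umat, dvec, Matrix.cons_val_one, Matrix.head_cons, Matrix.cons_val_zero]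
        split_ifs <;> first | (exfalso; omega) | ring), sumIndGe n m _]
    rw [if_pos rfl]
  have h12 : X 1 2 = (q + ↑m)⁻¹ := by
    rw [entry, Finset.sum_congr rfl (fun (z : Fin (n+m)) _ =>
      show Vmat n m w 1 z * ((dvec n m q z)⁻¹ * Umat n m z 2)
          = (if (z : ℕ) = n then (q + ↑m)⁻¹ else 0) from by
        simp only [Vmat, Umat, dvec, Matrix.cons_val_one, Matrix.cons_val_two, Matrix.tail_cons, Matrix.head_cons, Matrix.cons_val_zero]
        split_ifs <;> first | (exfalso; omega) | ring), sumIndEq n m n (by omega) _]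
    rw [if_neg (by decide)]; ring
  have h20 : X 2 0 = w * (q + ↑n)⁻¹ := by
    rw [entry, Finset.sum_congr rfl (fun (z : Fin (n+m)) _ =>
      show Vmat n m w 2 z * ((dvec n m q z)⁻¹ * Umat n m z 0)
          = (if (z : ℕ) = n - 1 then w * (q + ↑n)⁻¹ else 0) from by
        simp only [Vmat, Umat, dvec, Matrix.cons_val_zero, Matrix.cons_val_two, Matrix.tail_cons, Matrix.head_cons]
        split_ifs <;> first | (exfalso; omega) | ring), sumIndEq n m (n-1) (by omega) _]
    rw [if_neg (by decide)]; ring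
  have h21 : X 2 1 = -(w * (q + ↑m)⁻¹) := by
    rw [entry, Finset.sum_congr rfl (fun (z : Fin (n+m)) _ =>
      show Vmat n m w 2 z * ((dvec n m q z)⁻¹ * Umat n m z 1)
          = (if (z : ℕ) = n then -(w * (q + ↑m)⁻¹) else 0) from by
        simp only [Vmat, Umat, dvec, Matrix.cons_val_one, Matrix.cons_val_two, Matrix.tail_cons, Matrix.head_cons, Matrix.cons_val_zero]
        split_ifs <;> first | (exfalso; omega) | ring), sumIndEq n m n (by omega) _]
    rw [if_neg (by decide)]; ring
  have h22 : X 2 2 = 1 + (w * (q + ↑n)⁻¹ + w * (q + ↑m)⁻¹) := by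
    rw [entry, Finset.sum_congr rfl (fun (z : Fin (n+m)) _ =>
      show Vmat n m w 2 z * ((dvec n m q z)⁻¹ * Umat n m z 2)
          = (if (z : ℕ) = n - 1 then w * (q + ↑n)⁻¹ else 0)
            + (if (z : ℕ) = n then w * (q + ↑m)⁻¹ else 0) from by
        simp only [Vmat, Umat, dvec, Matrix.cons_val_two, Matrix.tail_cons, Matrix.head_cons]
        split_ifs <;> first | (exfalso; omega) | ring)]
    rw [Finset.sum_add_distrib, sumIndEq n m (n-1) (by omega) _, sumIndEq n m n (by omega) _]
    rw [if_pos rfl]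
  rw [Matrix.det_fin_three, h00, h01, h02, h10, h11, h12, h20, h21, h22]
  ring

lemma prod_dvec (n m : ℕ) (q : ℝ) :
    ∏ z : Fin (n + m), dvec n m q z = (q + n) ^ n * (q + m) ^ m := by
  rw [Fin.prod_univ_add]
  congr 1
  · rw [Finset.prod_congr rfl (fun (x : Fin n) _ =>
      show dvec n m q (Fin.castAdd m x) = q + n from by
        simp only [dvec, Fin.coe_castAdd]; rw [if_pos x.is_lt])]
    simp
  · rw [Finset.prod_congr rfl (fun (x : Fin m) _ =>
      show dvec n m q (Fin.natAdd n x) = q + m from by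
        simp only [dvec, Fin.coe_natAdd]; rw [if_neg (by omega)])]
    simp

/-- **Partition function of the bottleneck graph.** For `q > 0`,
`Z(q) = q (q(q+n)(q+m) + w(q+1)(2q+n+m)) (q+n)^{n-2} (q+m)^{m-2}`. -/
theorem bottleneck_partition (n m : ℕ) (hn : 1 ≤ n) (hm : 1 ≤ m)
    (w q : ℝ) (hw : 0 < w) (hq : 0 < q) :
    Zdet (bgAdj n m) (bgW n m w) q =
      q * (q * (q + (n : ℝ)) * (q + (m : ℝ)) +
          w * (q + 1) * (2 * q + (n : ℝ) + (m : ℝ))) *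
        (q + (n : ℝ)) ^ ((n : ℤ) - 2) * (q + (m : ℝ)) ^ ((m : ℤ) - 2) := by
  have ha : (q + (n : ℝ)) ≠ 0 := by positivity
  have hb : (q + (m : ℝ)) ≠ 0 := by positivity
  have hd : ∀ x, dvec n m q x ≠ 0 := fun x => by
    unfold dvec; split_ifs <;> positivity
  have inv1 : Matrix.diagonal (dvec n m q) * Matrix.diagonal (fun x => (dvec n m q x)⁻¹)
      = 1 := by
    rw [Matrix.diagonal_mul_diagonal]
    have h1 : (fun x => dvec n m q x * (dvec n m q x)⁻¹) = fun _ => (1:ℝ) :=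
      funext fun x => mul_inv_cancel₀ (hd x)
    rw [h1, Matrix.diagonal_one]
  have split : Matrix.diagonal (dvec n m q) + Umat n m * Vmat n m w
      = Matrix.diagonal (dvec n m q) *
        (1 + (Matrix.diagonal (fun x => (dvec n m q x)⁻¹) * Umat n m) * Vmat n m w) := by
    rw [Matrix.mul_add, Matrix.mul_one]
    congr 1
    rw [← Matrix.mul_assoc, ← Matrix.mul_assoc, inv1, Matrix.one_mul]
  unfold Zdet
  rw [decomp n m hn hm w q, split, Matrix.det_mul, Matrix.det_one_add_mul_comm,
    Matrix.det_diagonal, prod_dvec, det3 n m hn hm w q]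
  rw [show (n : ℤ) - 2 = (n : ℤ) + (-((2:ℕ) : ℤ)) from by push_cast; ring,
    show (m : ℤ) - 2 = (m : ℤ) + (-((2:ℕ) : ℤ)) from by push_cast; ring,
    zpow_add₀ ha, zpow_add₀ hb, zpow_natCast, zpow_natCast, zpow_neg, zpow_neg,
    zpow_natCast, zpow_natCast]
  field_simp
  ring

end
end
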